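/- For every c ∈ ℂ and all f, u, g ∈ C∞₂π(ℝ,ℂ), one has ∫₀^{2π} (3·u·u′ + c·u‴)·g dx = −∫₀^{2π} u·(u·g′ − u′·g) dx − c·∫₀^{2π} u·g‴ dx. In other words, the Euler equation on the Virasoro algebra with central charge c and quadratic Hamiltonian H(u) = ½∫₀^{2π} u² dx (inertia operator the identity) is the Korteweg–de Vries equation u_t = 3·u·u_x + c·u_xxx: its right-hand side is characterized against every test vector field g by minus the sum of the pairing ⟨u,[u,g]⟩ and c times the Gelfand–Fuchs cocycle μ(u,g). -/

import Mathlib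

open Real intervalIntegral
open scoped ContDiff

private lemma smooth_deriv {a : ℝ → ℂ} (ha : ContDiff ℝ ∞ a) : ContDiff ℝ ∞ (deriv a) :=
  (contDiff_infty_iff_deriv.mp ha).2

/-- Integration by parts on a period for smooth periodic functions. -/
private lemma parts {a b : ℝ → ℂ} (ha : ContDiff ℝ ∞ a) (hap : Function.Periodic a (2 * π))
    (hb : ContDiff ℝ ∞ b) (hbp : Function.Periodic b (2 * π)) :
    (∫ x in (0:ℝ)..(2 * π), deriv a x * b x)
      = -∫ x in (0:ℝ)..(2 * π), a x * deriv b x := by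
  have hsum : (∫ x in (0:ℝ)..(2 * π), deriv a x * b x + a x * deriv b x)
      = a (2 * π) * b (2 * π) - a 0 * b 0 := by
    apply intervalIntegral.integral_deriv_mul_eq_sub_of_hasDerivAt
      ha.continuous.continuousOn hb.continuous.continuousOn
    · intro x _; exact (ha.differentiable (by norm_num) x).hasDerivAt
    · intro x _; exact (hb.differentiable (by norm_num) x).hasDerivAt
    · exact ((smooth_deriv ha).continuous).intervalIntegrable _ _
    · exact ((smooth_deriv hb).continuous).intervalIntegrable _ _
  have h0 : a (2 * π) * b (2 * π) - a 0 * b 0 = 0 := by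
    have := hap 0; have := hbp 0; simp_all
  have hsplit : (∫ x in (0:ℝ)..(2 * π), deriv a x * b x + a x * deriv b x)
      = (∫ x in (0:ℝ)..(2 * π), deriv a x * b x)
        + ∫ x in (0:ℝ)..(2 * π), a x * deriv b x := by
    apply intervalIntegral.integral_add
    · exact ((smooth_deriv ha).continuous.mul hb.continuous).intervalIntegrable _ _
    · exact (ha.continuous.mul (smooth_deriv hb).continuous).intervalIntegrable _ _
  rw [hsplit, h0] at hsum
  linear_combination hsum

set_option maxHeartbeats 4000000 in
/-- **The KdV equation as the Euler equation on the Virasoro algebra.**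
For every central charge `c ∈ ℂ` and all smooth `2π`-periodic functions `f, u, g : ℝ → ℂ`
(representing elements of `Vect(S¹)` and its regular dual), one has
`∫₀^{2π} (3·u·u′ + c·u‴)·g dx = −∫₀^{2π} u·(u·g′ − u′·g) dx − c·∫₀^{2π} u·g‴ dx`;
i.e. the right-hand side `3·u·u_x + c·u_xxx` of the KdV equation, paired against every
test vector field `g`, is minus the sum of the pairing `⟨u,[u,g]⟩` and `c` times the
Gelfand–Fuchs cocycle `μ(u,g)`. -/
theorem kdv_is_euler_equation_on_virasoro (c : ℂ) (f u g : ℝ → ℂ)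
    (hf : ContDiff ℝ ∞ f) (hfp : Function.Periodic f (2 * π))
    (hu : ContDiff ℝ ∞ u) (hup : Function.Periodic u (2 * π))
    (hg : ContDiff ℝ ∞ g) (hgp : Function.Periodic g (2 * π)) :
    (∫ x in (0:ℝ)..(2 * π), (3 * u x * deriv u x + c * deriv (deriv (deriv u)) x) * g x)
      = -(∫ x in (0:ℝ)..(2 * π), u x * (u x * deriv g x - deriv u x * g x))
        - c * ∫ x in (0:ℝ)..(2 * π), u x * deriv (deriv (deriv g)) x := by
  have hu1 := smooth_deriv hu
  have hu2 := smooth_deriv hu1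
  have hg1 := smooth_deriv hg
  have hg2 := smooth_deriv hg1
  have perder : ∀ (a : ℝ → ℂ), Function.Periodic a (2 * π) →
      Function.Periodic (deriv a) (2 * π) := by
    intro a hap x
    calc deriv a (x + 2 * π) = deriv (fun y => a (y + 2 * π)) x :=
          (deriv_comp_add_const a _ x).symm
      _ = deriv a x := by rw [funext hap]
  have hup1 := perder u hup
  have hup2 := perder _ hup1
  have hgp1 := perder g hgp
  have hgp2 := perder _ hgp1
  set I := ∫ x in (0:ℝ)..(2 * π), u x * deriv u x * g x with hI
  set J := ∫ x in (0:ℝ)..(2 * π), u x * u x * deriv g x with hJ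
  set K := ∫ x in (0:ℝ)..(2 * π), u x * deriv (deriv (deriv g)) x with hK
  -- integration by parts for u² against g
  have hA : (∫ x in (0:ℝ)..(2 * π), deriv (fun y => u y * u y) x * g x)
      = -∫ x in (0:ℝ)..(2 * π), (u x * u x) * deriv g x :=
    parts (hu.mul hu) (fun x => by simp [hup x]) hg hgp
  have e1 : (fun x => deriv (fun y => u y * u y) x * g x)
      = fun x => 2 * (u x * deriv u x * g x) := by
    funext x
    rw [deriv_fun_mul (hu.differentiable (by norm_num) x) (hu.differentiable (by norm_num) x)]
    ring
  rw [e1, intervalIntegral.integral_const_mul] at hA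
  -- so 2 • I = -J
  have hJI : J = -(2 * I) := by rw [hJ, hI]; linear_combination hA
  -- triple integration by parts
  have hB1 : (∫ x in (0:ℝ)..(2 * π), deriv (deriv (deriv u)) x * g x)
      = -∫ x in (0:ℝ)..(2 * π), deriv (deriv u) x * deriv g x := parts hu2 hup2 hg hgp
  have hB2 : (∫ x in (0:ℝ)..(2 * π), deriv (deriv u) x * deriv g x)
      = -∫ x in (0:ℝ)..(2 * π), deriv u x * deriv (deriv g) x := parts hu1 hup1 hg1 hgp1
  have hB3 : (∫ x in (0:ℝ)..(2 * π), deriv u x * deriv (deriv g) x)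
      = -∫ x in (0:ℝ)..(2 * π), u x * deriv (deriv (deriv g)) x := parts hu hup hg2 hgp2
  have hB : (∫ x in (0:ℝ)..(2 * π), deriv (deriv (deriv u)) x * g x) = -K := by
    rw [hB1, hB2, hB3, hK]; ring
  -- split LHS
  have int1 : IntervalIntegrable (fun x => (3:ℂ) * (u x * deriv u x * g x))
      MeasureTheory.volume 0 (2 * π) :=
    (continuous_const.mul ((hu.continuous.mul hu1.continuous).mul
      hg.continuous)).intervalIntegrable _ _
  have int2 : IntervalIntegrable (fun x => c * (deriv (deriv (deriv u)) x * g x))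
      MeasureTheory.volume 0 (2 * π) :=
    (continuous_const.mul ((smooth_deriv hu2).continuous.mul hg.continuous)).intervalIntegrable _ _
  have hL : (∫ x in (0:ℝ)..(2 * π),
        (3 * u x * deriv u x + c * deriv (deriv (deriv u)) x) * g x)
      = (∫ x in (0:ℝ)..(2 * π), (3:ℂ) * (u x * deriv u x * g x))
        + ∫ x in (0:ℝ)..(2 * π), c * (deriv (deriv (deriv u)) x * g x) := by
    rw [← intervalIntegral.integral_add int1 int2]
    apply intervalIntegral.integral_congr
    intro x _; ring
  rw [intervalIntegral.integral_const_mul, intervalIntegral.integral_const_mul, ← hI] at hL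
  -- split the bracket integral on the RHS
  have hR : (∫ x in (0:ℝ)..(2 * π), u x * (u x * deriv g x - deriv u x * g x)) = J - I := by
    have intJ : IntervalIntegrable (fun x => u x * u x * deriv g x)
        MeasureTheory.volume 0 (2 * π) :=
      ((hu.continuous.mul hu.continuous).mul hg1.continuous).intervalIntegrable _ _
    have intI : IntervalIntegrable (fun x => u x * deriv u x * g x)
        MeasureTheory.volume 0 (2 * π) :=
      ((hu.continuous.mul hu1.continuous).mul hg.continuous).intervalIntegrable _ _
    rw [hJ, hI, ← intervalIntegral.integral_sub intJ intI]
    apply intervalIntegral.integral_congr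
    intro x _; ring
  rw [hL, hB, hR, hJI]
  ring
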